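/- arXiv:2509.01634 — 4 statements merged into one kernel-verified Lean document; each statement's English description precedes it below -/
import Mathlib

section
/- Let m ≥ 4 be composite and p the smallest prime dividing m. Let e₀ = m < e₁ < e₂ be integers such that b₁ = gcd(m, e₁) satisfies 1 < b₁ < m and gcd(b₁, e₂) = 1. Then e₁ ≥ m + p. Moreover, the quantity (m − b₁)(e₁ − 1) + (b₁ − 1)(e₂ − 1) is minimized, over all such triples, by the triple (m, m+p, m+p+1), where its value is (m − p)(m + p − 1) + (p − 1)(m + p). -/
/-- Let `m ≥ 4` be composite with smallest prime divisor `p = m.minFac`, and let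
`m < e₁ < e₂` with `b₁ = gcd m e₁` satisfying `1 < b₁ < m` and `gcd b₁ e₂ = 1`.
Then `e₁ ≥ m + p`, and the Milnor number
`(m - b₁)(e₁ - 1) + (b₁ - 1)(e₂ - 1)` is at least its value at the triple
`(m, m+p, m+p+1)`, namely `(m - p)(m + p - 1) + (p - 1)(m + p)`. -/
theorem mu_three_exponents_minimal (m e₁ e₂ : ℕ) (hm : 4 ≤ m) (hcomp : ¬ m.Prime)
    (h1 : m < e₁) (h2 : e₁ < e₂)
    (hb₁ : 1 < Nat.gcd m e₁) (hb₁' : Nat.gcd m e₁ < m)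
    (hb₂ : Nat.gcd (Nat.gcd m e₁) e₂ = 1) :
    m + m.minFac ≤ e₁ ∧
      (m - m.minFac) * (m + m.minFac - 1) + (m.minFac - 1) * (m + m.minFac) ≤
        (m - Nat.gcd m e₁) * (e₁ - 1) + (Nat.gcd m e₁ - 1) * (e₂ - 1) := by
  set b := Nat.gcd m e₁ with hbdef
  set p := m.minFac with hpdef
  have hbm : b ∣ m := Nat.gcd_dvd_left m e₁
  have hbe : b ∣ e₁ := Nat.gcd_dvd_right m e₁
  have hpb : p ≤ b := Nat.minFac_le_of_dvd hb₁ hbm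
  have hp2 : 2 ≤ p := (Nat.minFac_prime (by omega)).two_le
  have hbm' : b ≤ m := Nat.le_of_dvd (by omega) hbm
  have hdvd : b ∣ e₁ - m := Nat.dvd_sub hbe hbm
  have hle : b ≤ e₁ - m := Nat.le_of_dvd (by omega) hdvd
  have he1 : m + b ≤ e₁ := by omega
  refine ⟨by omega, ?_⟩
  have key : ∀ x : ℕ, 1 ≤ x → x ≤ m →
      (m - x) * (m + x - 1) + (x - 1) * (m + x) = m * (m + x - 2) := by
    intro x hx1 hx2
    zify [hx2, show 1 ≤ m + x by omega, show 2 ≤ m + x by omega, hx1]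
    ring
  calc (m - p) * (m + p - 1) + (p - 1) * (m + p)
      = m * (m + p - 2) := key p (by omega) (by omega)
    _ ≤ m * (m + b - 2) := Nat.mul_le_mul_left m (by omega)
    _ = (m - b) * (m + b - 1) + (b - 1) * (m + b) := (key b (by omega) hbm').symm
    _ ≤ (m - b) * (e₁ - 1) + (b - 1) * (e₂ - 1) := by
        gcongr <;> omega
end

section
/- Let m ≥ 4 be composite with prime factorization m = p₁ p₂ ⋯ p_r, p₁ ≤ p₂ ≤ ⋯ ≤ p_r, and let 3 ≤ k ≤ r+1. Define d_i = p₁ p₂ ⋯ p_{(k-1)-i} for i = 1, …, k−2, and the exponents E₀ = m, E_j = m + d₁ + d₂ + ⋯ + d_j for j = 1, …, k−2, E_{k-1} = E_{k-2} + 1. Then the gcd sequence B₀ = m, B_j = gcd(B_{j-1}, E_j) satisfies B_j = d_j for j = 1, …, k−2 and B_{k-1} = 1; in particular it is strictly decreasing and these exponents are valid characteristic exponents of an irreducible plane curve of multiplicity m with exactly k characteristic exponents. -/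
/-- Let `m ≥ 4` be composite with sorted prime factorization `p₁ ≤ ⋯ ≤ p_r`
(given by `m.primeFactorsList`), and `3 ≤ k ≤ r + 1`. Set `d 0 = m`,
`d i = p₁ ⋯ p_{(k-1)-i}` for `i ≥ 1` (so `d (k-1) = 1`), and exponents
`E 0 = m`, `E j = m + d 1 + ⋯ + d j` for `1 ≤ j ≤ k-2`, `E (k-1) = E (k-2) + 1`.
Then any gcd sequence `B` with `B 0 = m`, `B (j+1) = gcd (B j) (E (j+1))`
satisfies `B j = d j` for `1 ≤ j ≤ k-2`, `B (k-1) = 1`, and is strictly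
decreasing up to `k-1`: these are valid characteristic exponents. -/
theorem normal_form_gcd_sequence (m k : ℕ) (hm : 4 ≤ m) (hcomp : ¬ m.Prime)
    (hk3 : 3 ≤ k) (hkr : k ≤ m.primeFactorsList.length + 1)
    (d E B : ℕ → ℕ)
    (hd0 : d 0 = m)
    (hd : ∀ i, 1 ≤ i → d i = ((m.primeFactorsList).take (k - 1 - i)).prod)
    (hE : ∀ j, j ≤ k - 2 → E j = m + ∑ i ∈ Finset.Icc 1 j, d i)
    (hElast : E (k - 1) = E (k - 2) + 1)
    (hB0 : B 0 = m)
    (hBrec : ∀ j, B (j + 1) = Nat.gcd (B j) (E (j + 1))) :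
    (∀ j, 1 ≤ j → j ≤ k - 2 → B j = d j) ∧
      B (k - 1) = 1 ∧
      (∀ j, j < k - 1 → B (j + 1) < B j) := by
  have hm0 : m ≠ 0 := by omega
  set L := m.primeFactorsList with hLdef
  have hprodL : L.prod = m := Nat.prod_primeFactorsList hm0
  have hlen : k - 1 ≤ L.length := by omega
  have h2 : ∀ x ∈ L, 2 ≤ x := fun x hx => (Nat.prime_of_mem_primeFactorsList hx).two_le
  have Ppos : ∀ n, 0 < (L.take n).prod := by
    intro n
    refine List.prod_pos fun x hx => ?_
    have := h2 x (List.mem_of_mem_take hx)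
    omega
  have Pdvd : ∀ a b, a ≤ b → (L.take a).prod ∣ (L.take b).prod := by
    intro a b hab
    have h1 : L.take a = (L.take b).take a := by
      rw [List.take_take, Nat.min_eq_left hab]
    rw [h1]
    conv_rhs => rw [← List.take_append_drop a (L.take b), List.prod_append]
    exact dvd_mul_right _ _
  have Plt : ∀ a b, a < b → b ≤ L.length → (L.take a).prod < (L.take b).prod := by
    intro a b hab hb
    have ha : a < L.length := by omega
    have h1 : (L.take (a + 1)).prod = (L.take a).prod * L.get ⟨a, ha⟩ :=
      List.prod_take_succ L a ha
    have h2a : 2 ≤ L.get ⟨a, ha⟩ := h2 _ (L.get_mem _)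
    have hstep : (L.take a).prod < (L.take (a + 1)).prod := by
      rw [h1]
      have := Ppos a
      nlinarith
    exact hstep.trans_le (Nat.le_of_dvd (Ppos b) (Pdvd _ _ hab))
  have ddvdm : ∀ i, 1 ≤ i → d i ∣ m := by
    intro i hi
    rw [hd i hi, ← hprodL, show L.prod = (L.take L.length).prod by rw [List.take_length]]
    exact Pdvd _ _ (by omega)
  have ddvd : ∀ i j, 1 ≤ i → i ≤ j → d j ∣ d i := by
    intro i j hi hij
    rw [hd j (le_trans hi hij), hd i hi]
    exact Pdvd _ _ (by omega)
  have hdEj : ∀ j, 1 ≤ j → j ≤ k - 2 → d j ∣ E j := by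
    intro j hj hj2
    rw [hE j hj2]
    refine dvd_add (ddvdm j hj) (Finset.dvd_sum fun i hi => ?_)
    rw [Finset.mem_Icc] at hi
    exact ddvd i j hi.1 hi.2
  have hBd : ∀ j, j ≤ k - 2 → B j = if j = 0 then m else d j := by
    intro j
    induction j with
    | zero => intro _; simpa using hB0
    | succ n ih =>
      intro hj
      have hn : n ≤ k - 2 := by omega
      have hBn := ih hn
      simp only [Nat.succ_ne_zero, if_false]
      rw [hBrec n]
      have hn1 : 1 ≤ n + 1 := by omega
      have hDm : d (n + 1) ∣ m := ddvdm _ hn1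
      have hEeq : E (n + 1) = (m + ∑ i ∈ Finset.Icc 1 n, d i) + d (n + 1) := by
        rw [hE (n + 1) hj, Finset.sum_Icc_succ_top hn1]; ring
      have hDE : d (n + 1) ∣ E (n + 1) := by
        rw [hEeq]
        refine dvd_add (dvd_add hDm (Finset.dvd_sum fun i hi => ?_)) dvd_rfl
        rw [Finset.mem_Icc] at hi
        exact ddvd i (n + 1) hi.1 (by omega)
      have hDB : d (n + 1) ∣ B n := by
        by_cases hn0 : n = 0
        · rw [hBn, if_pos hn0]; exact hDm
        · rw [hBn, if_neg hn0]; exact ddvd n (n + 1) (by omega) (by omega)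
      have hBX : B n ∣ m + ∑ i ∈ Finset.Icc 1 n, d i := by
        by_cases hn0 : n = 0
        · subst hn0
          rw [hBn, if_pos rfl]
          simp
        · rw [hBn, if_neg hn0]
          refine dvd_add (ddvdm n (by omega)) (Finset.dvd_sum fun i hi => ?_)
          rw [Finset.mem_Icc] at hi
          exact ddvd i n hi.1 hi.2
      have hgD : Nat.gcd (B n) (E (n + 1)) ∣ d (n + 1) := by
        have h1 : Nat.gcd (B n) (E (n + 1)) ∣ m + ∑ i ∈ Finset.Icc 1 n, d i :=
          (Nat.gcd_dvd_left _ _).trans hBX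
        have h2' : Nat.gcd (B n) (E (n + 1)) ∣ (m + ∑ i ∈ Finset.Icc 1 n, d i) + d (n + 1) := by
          rw [← hEeq]; exact Nat.gcd_dvd_right _ _
        exact (Nat.dvd_add_right h1).mp h2'
      exact Nat.dvd_antisymm hgD (Nat.dvd_gcd hDB hDE)
  have hk2 : 1 ≤ k - 2 := by omega
  have hBk2 : B (k - 2) = d (k - 2) := by rw [hBd (k - 2) le_rfl, if_neg (by omega)]
  have hdEk2 : d (k - 2) ∣ E (k - 2) := hdEj (k - 2) hk2 le_rfl
  have hkk : k - 1 = (k - 2) + 1 := by omega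
  have hBk1 : B (k - 1) = 1 := by
    rw [hkk, hBrec (k - 2), ← hkk, hElast, hBk2]
    have h3 := (Nat.gcd_dvd_left (d (k - 2)) (E (k - 2) + 1)).trans hdEk2
    have h2' := Nat.gcd_dvd_right (d (k - 2)) (E (k - 2) + 1)
    exact Nat.dvd_one.mp ((Nat.dvd_add_right h3).mp h2')
  refine ⟨fun j hj1 hj2 => by rw [hBd j hj2, if_neg (by omega)], hBk1, ?_⟩
  intro j hj
  by_cases hjk : j = k - 2
  · subst hjk
    rw [← hkk, hBk1, hBk2, hd _ hk2]
    have := Plt 0 (k - 1 - (k - 2)) (by omega) (by omega)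
    simpa using this
  · have hj1 : j + 1 ≤ k - 2 := by omega
    rw [hBd (j + 1) hj1, if_neg (by omega), hBd j (by omega), hd (j + 1) (by omega)]
    by_cases hj0 : j = 0
    · subst hj0
      rw [if_pos rfl, ← hprodL,
        show L.prod = (L.take L.length).prod by rw [List.take_length]]
      exact Plt _ _ (by omega) le_rfl
    · rw [if_neg hj0, hd j (by omega)]
      exact Plt _ _ (by omega) (by omega)
end

section
/- Let m ≥ 4 be composite and let μ_min(m, k) denote the minimal Milnor number among irreducible plane curve germs of multiplicity m with exactly k characteristic exponents, for 2 ≤ k ≤ σ(m)+1, given by μ_min(m,2) = m(m−1), μ_min(m,3) = m(m−2+d₁), and μ_min(m,k) = m(m−2+d₁) + Σ_{j=1}^{k-3} d_j(d_{j+1}−1) for k ≥ 4, where d_j = p₁⋯p_{(k-1)-j} for the sorted prime factorization m = p₁ ≤ ⋯ ≤ p_r. Then μ_min(m, k) < μ_min(m, k+1) for all admissible k. -/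
/-- Strict monotonicity in `k` of the minimal Milnor number `μ_min(m, k)` among
irreducible plane curve germs of multiplicity `m` (composite, `m ≥ 4`) with
exactly `k` characteristic exponents, for `2 ≤ k ≤ σ(m)`, where `σ(m)` is the
number of prime factors of `m` with multiplicity. Here, with
`d k j = p₁ ⋯ p_{(k-1)-j}` from the sorted prime factorization,
`μ_min(m,2) = m(m-1)` and
`μ_min(m,k) = m(m - 2 + d k 1) + ∑_{j=1}^{k-3} d k j * (d k (j+1) - 1)`
for `k ≥ 3`. -/
theorem mu_min_strict_mono (m : ℕ) (hm : 4 ≤ m) (hcomp : ¬ m.Prime)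
    (d : ℕ → ℕ → ℕ)
    (hd : ∀ k j, d k j = ((m.primeFactorsList).take (k - 1 - j)).prod)
    (μmin : ℕ → ℕ)
    (h2 : μmin 2 = m * (m - 1))
    (hk : ∀ k, 3 ≤ k →
      μmin k = m * (m - 2 + d k 1) +
        ∑ j ∈ Finset.Icc 1 (k - 3), d k j * (d k (j + 1) - 1)) :
    ∀ k, 2 ≤ k → k ≤ m.primeFactorsList.length → μmin k < μmin (k + 1) := by
  set L := m.primeFactorsList with hL
  set P : ℕ → ℕ := fun n => (L.take n).prod with hP
  have hdP : ∀ k j, d k j = P (k - 1 - j) := fun k j => hd k j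
  have hpos : ∀ n, 0 < P n := by
    intro n
    apply List.prod_pos
    intro a ha
    exact (Nat.prime_of_mem_primeFactorsList (List.mem_of_mem_take ha)).pos
  have hstep : ∀ n, n < L.length → P n * 2 ≤ P (n + 1) := by
    intro n hn
    have htake : L.take n ++ [L.get ⟨n, hn⟩] = L.take (n + 1) := by
      simpa [List.concat_eq_append] using List.take_concat_get L n hn
    have hp : 2 ≤ L.get ⟨n, hn⟩ :=
      (Nat.prime_of_mem_primeFactorsList (L.get_mem _)).two_le
    calc P n * 2 ≤ P n * L.get ⟨n, hn⟩ := Nat.mul_le_mul_left _ hp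
      _ = P (n + 1) := by rw [hP]; simp only [← htake, List.prod_append,
          List.prod_singleton]
  intro k hk2 hkr
  rcases eq_or_lt_of_le hk2 with h | h
  · -- k = 2
    subst h
    rw [h2, hk 3 le_rfl]
    have : Finset.Icc 1 (3 - 3) = ∅ := by decide
    rw [this, Finset.sum_empty, add_zero, hdP]
    have h1 : 2 ≤ P (3 - 1 - 1) := by
      have := hstep 0 (by omega)
      simpa [hP] using this
    have : m - 1 < m - 2 + P (3 - 1 - 1) := by omega
    exact (mul_lt_mul_iff_right₀ (show 0 < m by omega)).mpr this
  · -- k ≥ 3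
    have hk3 : 3 ≤ k := h
    rw [hk k hk3, hk (k + 1) (by omega)]
    simp only [hdP]
    have hsum : ∑ j ∈ Finset.Icc 1 (k + 1 - 3), P (k + 1 - 1 - j) * (P (k + 1 - 1 - (j + 1)) - 1)
        = P (k - 1) * (P (k - 2) - 1)
          + ∑ j ∈ Finset.Icc 1 (k - 3), P (k - 1 - j) * (P (k - 1 - (j + 1)) - 1) := by
      rw [← Finset.Ico_add_one_right_eq_Icc, Finset.sum_Ico_eq_sum_range,
          ← Finset.Ico_add_one_right_eq_Icc, Finset.sum_Ico_eq_sum_range]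
      rw [show k + 1 - 3 + 1 - 1 = (k - 3) + 1 from by omega,
          show k - 3 + 1 - 1 = k - 3 from by omega,
          Finset.sum_range_succ']
      rw [show k + 1 - 1 - (1 + 0) = k - 1 from by omega,
          show k + 1 - 1 - (1 + 0 + 1) = k - 2 from by omega]
      rw [add_comm]
      congr 1
      apply Finset.sum_congr rfl
      intro i _
      rw [show k + 1 - 1 - (1 + (i + 1)) = k - 1 - (1 + i) from by omega,
          show k + 1 - 1 - (1 + (i + 1) + 1) = k - 1 - (1 + i + 1) from by omega]
    rw [hsum]
    have hA : 1 ≤ P (k - 1 - 1) := hpos _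
    have hABeq : k - 1 - 1 + 1 = k - 1 := by omega
    have hAB : P (k - 1 - 1) * 2 ≤ P (k - 1) := by
      have := hstep (k - 1 - 1) (by omega)
      rwa [hABeq] at this
    have hlt : m * (m - 2 + P (k - 1 - 1)) < m * (m - 2 + P (k + 1 - 1 - 1)) := by
      apply (mul_lt_mul_iff_right₀ (show 0 < m by omega)).mpr
      have : P (k + 1 - 1 - 1) = P (k - 1) := by rw [show k + 1 - 1 - 1 = k - 1 from by omega]
      omega
    have hAB2 : P (k - 1) * (P (k - 2) - 1)
          + ∑ j ∈ Finset.Icc 1 (k - 3), P (k - 1 - j) * (P (k - 1 - (j + 1)) - 1)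
        ≥ ∑ j ∈ Finset.Icc 1 (k - 3), P (k - 1 - j) * (P (k - 1 - (j + 1)) - 1) := by
      omega
    omega
end

section
/- Let m ≥ 3 and suppose an irreducible plane curve germ has three characteristic exponents e₀ = m, e₁, e₂ with gcd(m, e₁) = 2 (so m and e₁ are even) and e₂ odd with gcd(2, e₂) = 1. If the Milnor number (m − 2)(e₁ − 1) + (2 − 1)(e₂ − 1) is minimal among all such data (i.e., equals the μ_{m,3}-minimal value), then e₁ = m + 2 and e₂ = m + 3. -/
/-- Let `m ≥ 4` be even, and suppose an irreducible plane curve germ has three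
characteristic exponents `m < e₁ < e₂` with `gcd m e₁ = 2` (so `e₁` even) and
`e₂` odd. If the Milnor number `(m − 2)(e₁ − 1) + (e₂ − 1)` attains the
`μ_{m,3}`-minimal value `(m − 2)(m + 1) + (m + 2)` (its value at
`(e₁, e₂) = (m+2, m+3)`), then `e₁ = m + 2` and `e₂ = m + 3`. -/
theorem minimal_three_exponents_even (m e₁ e₂ : ℕ) (hm : 4 ≤ m) (hme : Even m)
    (h1 : m < e₁) (h2 : e₁ < e₂)
    (hgcd : Nat.gcd m e₁ = 2) (he₂ : Odd e₂)
    (hmin : (m - 2) * (e₁ - 1) + (e₂ - 1) = (m - 2) * (m + 1) + (m + 2)) :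
    e₁ = m + 2 ∧ e₂ = m + 3 := by
  have h2e : 2 ∣ e₁ := hgcd ▸ Nat.gcd_dvd_right m e₁
  obtain ⟨k, hk⟩ := h2e
  obtain ⟨j, hj⟩ := hme
  -- e₁ even and > m even, so e₁ ≥ m + 2
  have he1 : m + 2 ≤ e₁ := by omega
  rcases eq_or_lt_of_le he1 with heq | hlt
  · refine ⟨heq.symm, ?_⟩
    rw [← heq, show m + 2 - 1 = m + 1 from rfl] at hmin
    omega
  · -- e₁ ≥ m + 4
    have he4 : m + 4 ≤ e₁ := by omega
    exfalso
    have hmul : (m - 2) * (m + 3) ≤ (m - 2) * (e₁ - 1) :=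
      Nat.mul_le_mul_left _ (by omega)
    have hexp : (m - 2) * (m + 3) = (m - 2) * (m + 1) + 2 * (m - 2) := by ring
    omega
end
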